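/- Let α ∈ (−1,0) and j₁ > 0. Then ∫_{tr(j₁,0)} ‖x‖^{2α} dx = (√2 · j₁^{2α+2})/(4(α+1)) · ₂F₁(1/2, 3/2+α; 3/2; 1/2). -/

import Mathlib

open MeasureTheory Filter Set Real
open scoped ENNReal NNReal

noncomputable section

abbrev E2 : Type := EuclideanSpace ℝ (Fin 2)

/-- The triangle `tr(a,b) = {(x₁,x₂) : b ≤ x₁ ≤ a, b ≤ x₂ ≤ x₁}`. -/
def tri (a b : ℝ) : Set E2 :=
  {x : E2 | b ≤ x 0 ∧ x 0 ≤ a ∧ b ≤ x 1 ∧ x 1 ≤ x 0}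

/-- The Gauss hypergeometric function `₂F₁(a,b;c;z) = Σₖ (a)ₖ(b)ₖ/(c)ₖ · zᵏ/k!`,
where `(q)ₖ` is the (ascending) Pochhammer symbol. -/
def hyp2F1 (a b c z : ℝ) : ℝ :=
  ∑' k : ℕ, ((ascPochhammer ℝ k).eval a * (ascPochhammer ℝ k).eval b /
    (ascPochhammer ℝ k).eval c) * z ^ k / (k.factorial : ℝ)


/-- shorthand -/
def P (k : ℕ) (x : ℝ) : ℝ := (ascPochhammer ℝ k).eval x

lemma P_zero (x : ℝ) : P 0 x = 1 := by simp [P, ascPochhammer_zero]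

lemma P_succ (k : ℕ) (x : ℝ) : P (k+1) x = P k x * (x + k) := by
  simp [P, ascPochhammer_succ_eval]

lemma P_succ_left (k : ℕ) (x : ℝ) : P (k+1) x = x * P k (x+1) := by
  simp [P, ascPochhammer_succ_left, Polynomial.eval_comp, Polynomial.eval_mul]

lemma P_pos {x : ℝ} (hx : 0 < x) : ∀ k, 0 < P k x := by
  intro k
  induction k with
  | zero => simp [P_zero]
  | succ j ih => rw [P_succ]; positivity

/-- The basic series summand. -/
def bt (β y : ℝ) (k : ℕ) : ℝ := P k β * y ^ k / (k.factorial : ℝ)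

lemma sumAbs (β : ℝ) {y : ℝ} (hy : |y| ≤ 3/4) : Summable (fun k => |bt β y k|) := by
  apply summable_of_ratio_norm_eventually_le (r := 7/8) (by norm_num)
  have : ∀ᶠ k : ℕ in atTop, |β + k| / (k+1 : ℝ) ≤ 7/6 := by
    filter_upwards [eventually_ge_atTop (⌈6 * |β|⌉₊)] with k hk
    have hk' : 6 * |β| ≤ (k : ℝ) := le_trans (Nat.le_ceil _) (by exact_mod_cast hk)
    rw [div_le_iff₀ (by positivity)]
    calc |β + k| ≤ |β| + k := by
          calc |β + (k:ℝ)| ≤ |β| + |(k:ℝ)| := abs_add_le _ _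
          _ = |β| + k := by rw [abs_of_nonneg (by positivity : (0:ℝ) ≤ (k:ℝ))]
      _ ≤ 7/6 * (k+1) := by nlinarith [abs_nonneg β]
  filter_upwards [this] with k hk
  have hrec : bt β y (k+1) = bt β y k * ((β + k) * y / (k+1)) := by
    simp only [bt, P_succ, Nat.factorial_succ, pow_succ]
    push_cast
    field_simp
  simp only [Real.norm_eq_abs, abs_abs]
  rw [← Real.norm_eq_abs (bt β y (k+1)), ← Real.norm_eq_abs (bt β y k)]
  rw [hrec, norm_mul]
  have h2 : ‖(β + k) * y / (k+1 : ℝ)‖ ≤ 7/8 := by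
    rw [norm_div, norm_mul]
    have h3 : ‖((k:ℝ)+1)‖ = (k:ℝ)+1 := by
      rw [Real.norm_eq_abs, abs_of_nonneg]; positivity
    rw [h3]
    rw [div_le_iff₀ (by positivity)]
    have hb : ‖β + (k:ℝ)‖ ≤ 7/6 * ((k:ℝ)+1) := by
      rw [Real.norm_eq_abs]
      rw [div_le_iff₀ (by positivity)] at hk
      linarith
    calc ‖β + (k:ℝ)‖ * ‖y‖ ≤ (7/6 * ((k:ℝ)+1)) * (3/4) := by
          apply mul_le_mul hb (by rwa [Real.norm_eq_abs]) (norm_nonneg _) (by positivity)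
      _ = 7/8 * ((k:ℝ)+1) := by ring
  calc ‖bt β y k‖ * ‖(β + k) * y / (k+1:ℝ)‖ ≤ ‖bt β y k‖ * (7/8) :=
        mul_le_mul_of_nonneg_left h2 (norm_nonneg _)
    _ = 7/8 * ‖bt β y k‖ := by ring

lemma sumA (β : ℝ) {y : ℝ} (hy : |y| ≤ 3/4) : Summable (bt β y) :=
  (sumAbs β hy).of_abs

/-- Shift identity: `S β y = (1-y) * S (β+1) y`. -/
lemma shiftId (β : ℝ) {y : ℝ} (hy : |y| ≤ 3/4) :
    ∑' k, bt β y k = (1 - y) * ∑' k, bt (β+1) y k := by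
  have h1 : HasSum (bt (β+1) y) (∑' k, bt (β+1) y k) := (sumA (β+1) hy).hasSum
  set T := ∑' k, bt (β+1) y k with hT
  -- shifted series
  set c : ℕ → ℝ := fun k => match k with
    | 0 => 0
    | (j+1) => P j (β+1) * y ^ (j+1) / (j.factorial : ℝ) with hc
  have h2 : HasSum (fun j => c (j+1)) (y * T) := by
    have := h1.mul_left y
    convert this using 1
    · rfl
    funext j
    simp only [hc, bt, pow_succ]
    ring
  have hc0 : c 0 = 0 := rfl
  have h3 : HasSum c (y * T) := by
    have := (hasSum_nat_add_iff (f := c) 1).mp h2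
    rwa [Finset.sum_range_one, hc0, add_zero] at this
  have h4 : HasSum (fun k => bt (β+1) y k - c k) (T - y * T) := h1.sub h3
  have h5 : (fun k => bt (β+1) y k - c k) = bt β y := by
    funext k
    match k with
    | 0 => simp [bt, hc, P_zero]
    | (j+1) =>
      have e1 : P (j+1) (β+1) = P j (β+1) * ((β+1) + j) := P_succ j (β+1)
      have e2 : P (j+1) β = β * P j (β+1) := P_succ_left j β
      have hfac : ((j+1).factorial : ℝ) = (j+1) * j.factorial := by
        push_cast [Nat.factorial_succ]; ring
      simp only [bt, hc, e1, e2, hfac]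
      have hjf : (j.factorial : ℝ) ≠ 0 := Nat.cast_ne_zero.mpr j.factorial_ne_zero
      field_simp
      ring
  rw [h5] at h4
  rw [h4.tsum_eq]
  ring

lemma Sderiv (β : ℝ) : ∀ y ∈ Set.Ioo (-(3/4):ℝ) (3/4),
    HasDerivAt (fun z => ∑' k, bt β z k) (β * ∑' k, bt (β+1) y k) y := by
  intro y hy
  have hy' : |y| ≤ 3/4 := (abs_lt.mpr ⟨hy.1, hy.2⟩).le
  set u : ℕ → ℝ := fun k => |P k β| / (k.factorial : ℝ) * (k * (3/4)^(k-1)) with hu_def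
  set g' : ℕ → ℝ → ℝ := fun k z => P k β / (k.factorial : ℝ) * (k * z^(k-1)) with hg'_def
  have hu : Summable u := by
    have h1 : (fun j => u (j+1)) = fun j => |β| * |bt (β+1) (3/4) j| := by
      funext j
      simp only [hu_def, bt, P_succ_left]
      have hjf : ((j.factorial : ℝ)) ≠ 0 := Nat.cast_ne_zero.mpr j.factorial_ne_zero
      have hfac : (((j+1).factorial : ℝ)) = (j+1) * j.factorial := by
        push_cast [Nat.factorial_succ]; ring
      rw [abs_mul, abs_div, abs_mul, abs_pow]
      rw [hfac, Nat.abs_cast]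
      rw [abs_of_nonneg (by norm_num : (0:ℝ) ≤ 3/4)]
      have : (j + 1 : ℕ) - 1 = j := rfl
      rw [this]
      push_cast
      have hj1 : (0:ℝ) < (j:ℝ) + 1 := by positivity
      field_simp
    have h2 : Summable (fun j => u (j+1)) := by
      rw [h1]
      exact (sumAbs (β+1) (by rw [abs_of_nonneg] <;> norm_num)).mul_left |β|
    exact (summable_nat_add_iff 1).mp h2
  have hg : ∀ k z, z ∈ Set.Ioo (-(3/4):ℝ) (3/4) → HasDerivAt (fun z => bt β z k) (g' k z) z := by
    intro k z _
    have heq : (fun z => bt β z k) = fun z => P k β / (k.factorial : ℝ) * z^k := by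
      funext z; rw [bt]; ring
    rw [heq]
    exact (hasDerivAt_pow k z).const_mul _
  have hg'b : ∀ k z, z ∈ Set.Ioo (-(3/4):ℝ) (3/4) → ‖g' k z‖ ≤ u k := by
    intro k z hz
    have hz' : |z| ≤ 3/4 := (abs_lt.mpr ⟨hz.1, hz.2⟩).le
    simp only [hg'_def, hu_def, Real.norm_eq_abs, abs_mul, abs_div, Nat.abs_cast, abs_pow]
    gcongr
  have hg0 : Summable (fun k => bt β (0:ℝ) k) := sumA β (by norm_num : |(0:ℝ)| ≤ 3/4)
  have H := hasDerivAt_tsum_of_isPreconnected hu isOpen_Ioo (convex_Ioo _ _).isPreconnected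
    hg hg'b (by norm_num : (0:ℝ) ∈ Set.Ioo (-(3/4):ℝ) (3/4)) hg0 hy
  have h3 : HasSum (bt (β+1) y) (∑' k, bt (β+1) y k) := (sumA (β+1) hy').hasSum
  have h2 : HasSum (fun j => g' (j+1) y) (β * ∑' k, bt (β+1) y k) := by
    have := h3.mul_left β
    convert this using 1
    · rfl
    funext j
    simp only [hg'_def, bt, P_succ_left]
    have hjf : ((j.factorial : ℝ)) ≠ 0 := Nat.cast_ne_zero.mpr j.factorial_ne_zero
    have hfac : (((j+1).factorial : ℝ)) = (j+1) * j.factorial := by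
      push_cast [Nat.factorial_succ]; ring
    have : (j + 1 : ℕ) - 1 = j := rfl
    rw [hfac, this]
    push_cast
    field_simp
  have hg'0 : g' 0 y = 0 := by simp [hg'_def]
  have h4 : HasSum (fun k => g' k y) (β * ∑' k, bt (β+1) y k) := by
    have := (hasSum_nat_add_iff (f := fun k => g' k y) 1).mp h2
    rwa [Finset.sum_range_one, hg'0, add_zero] at this
  rwa [h4.tsum_eq] at H

lemma Szero (β : ℝ) : ∑' k, bt β (0:ℝ) k = 1 := by
  rw [tsum_eq_single 0]
  · simp [bt, P_zero]
  · intro k hk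
    simp [bt, zero_pow hk]

lemma binomial_tsum (β : ℝ) {v : ℝ} (hv : v ∈ Set.Icc (0:ℝ) (1/2)) :
    ∑' k, bt β v k = (1 - v) ^ (-β) := by
  set t : Set ℝ := Set.Ioo (-(3/4):ℝ) (3/4) with ht_def
  set F : ℝ → ℝ := fun y => (1-y)^β * ∑' k, bt β y k with hF_def
  have hF : ∀ y ∈ t, HasDerivAt F 0 y := by
    intro y hy
    have hy' : |y| ≤ 3/4 := (abs_lt.mpr ⟨hy.1, hy.2⟩).le
    have h1y : (0:ℝ) < 1 - y := by have := hy.2; linarith [hy.2]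
    have hS := Sderiv β y hy
    have h0 : HasDerivAt (fun z : ℝ => 1 - z) (-1) y := (hasDerivAt_id y).const_sub 1
    have hp : HasDerivAt (fun z : ℝ => (1-z)^β) (-1 * β * (1-y)^(β-1)) y :=
      h0.rpow_const (Or.inl h1y.ne')
    have hmul := hp.mul hS
    have hval : -1 * β * (1-y)^(β-1) * (∑' k, bt β y k) +
        (1-y)^β * (β * ∑' k, bt (β+1) y k) = 0 := by
      rw [shiftId β hy']
      have hpow : (1-y)^β = (1-y)^(β-1) * (1-y) := by
        rw [← Real.rpow_add_one h1y.ne' (β-1)]; norm_num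
      rw [hpow]; ring
    rwa [hval] at hmul
  have hdiff : DifferentiableOn ℝ F t := fun y hy =>
    (hF y hy).differentiableAt.differentiableWithinAt
  have hfd : ∀ y ∈ t, fderivWithin ℝ F t y = 0 := by
    intro y hy
    rw [fderivWithin_of_isOpen isOpen_Ioo hy]
    refine ContinuousLinearMap.ext fun w => ?_
    have h1 := fderiv_eq_smul_deriv (𝕜 := ℝ) (f := F) (x := y) w
    have h2 := (hF y hy).deriv
    rw [h2, smul_zero] at h1
    rw [h1]
    rfl
  have hvt : v ∈ t := ⟨by linarith [hv.1], by linarith [hv.2]⟩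
  have h0t : (0:ℝ) ∈ t := by constructor <;> norm_num
  have hconst : F v = F 0 :=
    (convex_Ioo _ _).is_const_of_fderivWithin_eq_zero hdiff hfd hvt h0t
  have hF0 : F 0 = 1 := by
    simp only [hF_def, sub_zero, Real.one_rpow, one_mul, Szero]
  rw [hF0] at hconst
  have h1v : (0:ℝ) < 1 - v := by linarith [hv.2]
  have hne : (1-v)^β ≠ 0 := (Real.rpow_pos_of_pos h1v β).ne'
  rw [Real.rpow_neg h1v.le]
  field_simp [hF_def] at hconst ⊢
  linarith [hconst]

lemma binomial_hasSum (β : ℝ) {v : ℝ} (hv : v ∈ Set.Icc (0:ℝ) (1/2)) :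
    HasSum (fun k => bt β v k) ((1 - v) ^ (-β) : ℝ) := by
  have hv' : |v| ≤ 3/4 := by rw [abs_of_nonneg hv.1]; linarith [hv.2]
  have := (sumA β hv').hasSum
  rwa [binomial_tsum β hv] at this

lemma P13 : ∀ k : ℕ, P k (3/2) = P k (1/2) * (2*k+1) := by
  intro k
  induction k with
  | zero => simp [P_zero]
  | succ j ih =>
    rw [P_succ, P_succ, ih]
    push_cast
    ring

lemma intE (β : ℝ) :
    ∫ s in Set.Ioc (0:ℝ) 1, (1 - s^2/2)^(-β) = ∑' k : ℕ, bt β (1/2) k / (2*k+1) := by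
  set F : ℕ → ℝ → ℝ := fun k s => bt β (1/2) k * s^(2*k) with hF_def
  have habs : Summable (fun k => |bt β (1/2) k|) :=
    sumAbs β (by rw [abs_of_nonneg] <;> norm_num)
  have step1 : ∀ s ∈ Set.Ioc (0:ℝ) 1, (1 - s^2/2)^(-β) = ∑' k, F k s := by
    intro s hs
    have hs2 : s^2/2 ∈ Set.Icc (0:ℝ) (1/2) := by
      constructor
      · positivity
      · nlinarith [hs.1, hs.2]
    have h := (binomial_hasSum β hs2).tsum_eq
    rw [← h]
    apply tsum_congr
    intro k
    simp only [hF_def, bt]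
    rw [div_pow, pow_mul, div_pow, one_pow]
    ring
  rw [setIntegral_congr_fun measurableSet_Ioc step1]
  have hint : ∀ k, IntegrableOn (F k) (Set.Ioc (0:ℝ) 1) := by
    intro k
    apply Continuous.integrableOn_Ioc
    exact continuous_const.mul (continuous_pow _)
  have hnorm : Summable (fun k => ∫ s in Set.Ioc (0:ℝ) 1, ‖F k s‖) := by
    apply Summable.of_nonneg_of_le (fun k => ?_) (fun k => ?_) habs
    · positivity
    · have hb : ∀ s ∈ Set.Ioc (0:ℝ) 1, ‖F k s‖ ≤ |bt β (1/2) k| := by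
        intro s hs
        rw [hF_def]
        simp only [Real.norm_eq_abs, abs_mul]
        have h1 : |s ^ (2*k)| ≤ 1 := by
          rw [abs_pow]
          apply pow_le_one₀ (abs_nonneg s)
          rw [abs_of_nonneg hs.1.le]; exact hs.2
        calc |bt β (1/2) k| * |s^(2*k)| ≤ |bt β (1/2) k| * 1 :=
              mul_le_mul_of_nonneg_left h1 (abs_nonneg _)
          _ = |bt β (1/2) k| := mul_one _
      calc ∫ s in Set.Ioc (0:ℝ) 1, ‖F k s‖
          ≤ ∫ _ in Set.Ioc (0:ℝ) 1, |bt β (1/2) k| := by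
            apply setIntegral_mono_on (hint k).norm (integrableOn_const measure_Ioc_lt_top.ne)
              measurableSet_Ioc hb
        _ = |bt β (1/2) k| := by
            rw [setIntegral_const]
            simp [Real.volume_Ioc]
  rw [← integral_tsum_of_summable_integral_norm hint hnorm]
  apply tsum_congr
  intro k
  rw [hF_def]
  rw [MeasureTheory.integral_const_mul]
  have : ∫ s in Set.Ioc (0:ℝ) 1, s ^ (2*k) = 1/(2*(k:ℝ)+1) := by
    rw [← intervalIntegral.integral_of_le (by norm_num : (0:ℝ) ≤ 1)]
    rw [integral_pow]
    push_cast
    norm_num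
  rw [this]
  ring

lemma subs (α : ℝ) :
    ∫ s in (0:ℝ)..1, (Real.sqrt 2)⁻¹ * (1 - s^2/2)^(-(3/2+α)) = ∫ t in (0:ℝ)..1, (1+t^2)^α := by
  set f : ℝ → ℝ := fun s => s * (2 - s^2)^(-(1/2) : ℝ) with hf_def
  set f' : ℝ → ℝ := fun s => 2 * (2 - s^2)^(-(3/2) : ℝ) with hf'_def
  set g : ℝ → ℝ := fun t => (1 + t^2)^α with hg_def
  have hw : ∀ s ∈ Set.uIcc (0:ℝ) 1, (0:ℝ) < 2 - s^2 := by
    intro s hs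
    rw [Set.uIcc_of_le (by norm_num : (0:ℝ) ≤ 1)] at hs
    nlinarith [hs.1, hs.2]
  have hderiv : ∀ s ∈ Set.uIcc (0:ℝ) 1, HasDerivAt f (f' s) s := by
    intro s hs
    have hw0 : (0:ℝ) < 2 - s^2 := hw s hs
    have h1 : HasDerivAt (fun s : ℝ => 2 - s^2) (-(2*s)) s := by
      have := (hasDerivAt_pow 2 s).const_sub 2
      convert this using 1
      · rfl
      · rfl
      norm_num
    have h2 : HasDerivAt (fun s : ℝ => (2 - s^2)^(-(1/2) : ℝ))
        (-(2*s) * (-(1/2)) * (2-s^2)^((-(1/2) : ℝ) - 1)) s := h1.rpow_const (Or.inl hw0.ne')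
    have h3 := (hasDerivAt_id s).mul h2
    convert h3 using 1
    · rfl
    · rfl
    · rfl
    simp only [hf'_def, id_eq, one_mul]
    have e1 : ((-(1/2) : ℝ) - 1 : ℝ) = -(3/2) := by norm_num
    rw [e1]
    have e2 : (2 - s^2)^(-(1/2) : ℝ) = (2 - s^2) * (2-s^2)^(-(3/2) : ℝ) := by
      rw [show (-(1/2):ℝ) = 1 + (-(3/2)) by norm_num, Real.rpow_add hw0, Real.rpow_one]
    rw [e2]
    ring
  have hcont : ContinuousOn f' (Set.uIcc (0:ℝ) 1) := by
    apply ContinuousOn.mul continuousOn_const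
    exact (continuous_const.sub (continuous_pow 2)).continuousOn.rpow_const
      (fun x hx => Or.inl (hw x hx).ne')
  have hgc : Continuous g := by
    apply Continuous.rpow_const (continuous_const.add (continuous_pow 2))
    intro x
    exact Or.inl (by positivity : (0:ℝ) < 1 + x^2).ne'
  have key := intervalIntegral.integral_comp_smul_deriv hderiv hcont hgc
  have hf0 : f 0 = 0 := by simp [hf_def]
  have hf1 : f 1 = 1 := by
    simp only [hf_def, one_pow]
    norm_num
  rw [hf0, hf1] at key
  rw [← key]
  apply intervalIntegral.integral_congr
  intro s hs
  have hw0 := hw s hs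
  simp only [smul_eq_mul, hf_def, hf'_def, hg_def, Function.comp]
  have e1 : (s * (2-s^2)^(-(1/2):ℝ))^2 = s^2 * (2-s^2)^(-1:ℝ) := by
    rw [mul_pow]
    congr 1
    rw [← Real.rpow_natCast ((2-s^2)^(-(1/2):ℝ)) 2, ← Real.rpow_mul hw0.le]
    norm_num
  have e2 : 1 + s^2 * (2-s^2)^(-1:ℝ) = 2 * (2-s^2)^(-1:ℝ) := by
    rw [Real.rpow_neg_one]
    field_simp
    ring
  rw [e1, e2]
  have e3 : (2 * (2-s^2)^(-1:ℝ))^α = 2^α * (2-s^2)^(-α) := by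
    rw [Real.mul_rpow (by norm_num) (Real.rpow_nonneg hw0.le _)]
    congr 1
    rw [← Real.rpow_mul hw0.le]
    norm_num
  rw [e3]
  have e4 : (1 - s^2/2 : ℝ) = (2-s^2)/2 := by ring
  rw [e4]
  rw [Real.div_rpow hw0.le (by norm_num : (0:ℝ) ≤ 2)]
  rw [show Real.sqrt 2 = (2:ℝ)^((1:ℝ)/2) from Real.sqrt_eq_rpow 2]
  have h2pos : (0:ℝ) < 2 := by norm_num
  rw [div_eq_mul_inv ((2-s^2)^(-(3/2+α) : ℝ))]
  rw [← Real.rpow_neg h2pos.le ((1:ℝ)/2)]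
  rw [← Real.rpow_neg h2pos.le (-(3/2+α)), neg_neg]
  have e6 : (2:ℝ)^(-((1:ℝ)/2)) * (2:ℝ)^(3/2+α) = 2 * 2^α := by
    rw [← Real.rpow_add h2pos]
    rw [show (-((1:ℝ)/2) + (3/2+α)) = 1 + α by ring]
    rw [Real.rpow_add h2pos, Real.rpow_one]
  have e7 : (2-s^2)^(-(3/2+α) : ℝ) = (2-s^2)^(-(3/2) : ℝ) * (2-s^2)^(-α : ℝ) := by
    rw [← Real.rpow_add hw0]
    ring_nf
  rw [e7]
  linear_combination ((2 - s^2)^(-(3/2):ℝ) * (2 - s^2)^(-α)) * e6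


lemma tri_integral (α : ℝ) (hα : α ∈ Set.Ioo (-1:ℝ) 0) (j₁ : ℝ) (hj₁ : 0 < j₁) :
    ∫ x in tri j₁ 0, ‖x‖ ^ (2*α) =
      (∫ t in (0:ℝ)..1, (1+t^2)^α) * j₁ ^ (2*α+2) / (2*α+2) := by
  obtain ⟨hα1, hα2⟩ := hα
  set C := ∫ t in (0:ℝ)..1, (1+t^2)^α with hC_def
  have hC0 : 0 ≤ C := by
    apply intervalIntegral.integral_nonneg (by norm_num)
    intro t _
    exact Real.rpow_nonneg (by positivity) _
  -- the target set and function on ℝ × ℝ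
  set S : Set (ℝ × ℝ) := {p | 0 ≤ p.1 ∧ p.1 ≤ j₁ ∧ 0 ≤ p.2 ∧ p.2 ≤ p.1} with hS_def
  set F : ℝ × ℝ → ℝ≥0∞ := fun p => ENNReal.ofReal ((p.1^2 + p.2^2)^α) with hF_def
  have hFmeas : Measurable F := by
    apply Measurable.ennreal_ofReal
    exact ((measurable_fst.pow_const 2).add (measurable_snd.pow_const 2)).pow measurable_const
  have hS : MeasurableSet S := by
    have h1 : S = {p : ℝ×ℝ | 0 ≤ p.1} ∩ ({p | p.1 ≤ j₁} ∩ ({p | 0 ≤ p.2} ∩ {p | p.2 ≤ p.1})) := by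
      ext p; simp [hS_def, Set.mem_inter_iff, and_assoc]
    rw [h1]
    exact ((isClosed_le continuous_const continuous_fst).inter
      ((isClosed_le continuous_fst continuous_const).inter
      ((isClosed_le continuous_const continuous_snd).inter
      (isClosed_le continuous_snd continuous_fst)))).measurableSet
  -- norm formula
  have hnorm : ∀ x : E2, ‖x‖ ^ (2*α) = ((x 0)^2 + (x 1)^2) ^ α := by
    intro x
    rw [EuclideanSpace.norm_eq, Fin.sum_univ_two, Real.norm_eq_abs, Real.norm_eq_abs,
      sq_abs, sq_abs, Real.sqrt_eq_rpow, ← Real.rpow_mul (by positivity)]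
    congr 1
    ring
  -- step 1: Bochner to lintegral
  have hmeas2 : Measurable (fun x : E2 => ‖x‖ ^ (2*α)) :=
    measurable_norm.pow measurable_const
  rw [MeasureTheory.integral_eq_lintegral_of_nonneg_ae
    (Eventually.of_forall fun x => Real.rpow_nonneg (norm_nonneg x) _)
    hmeas2.aestronglyMeasurable]
  -- step 2: transfer to ℝ × ℝ
  have hρ : MeasurePreserving
      (((MeasurableEquiv.toLp 2 (Fin 2 → ℝ)).symm).trans (MeasurableEquiv.finTwoArrow) :
        E2 ≃ᵐ ℝ × ℝ) volume volume :=
    (volume_preserving_finTwoArrow ℝ).comp (EuclideanSpace.volume_preserving_symm_measurableEquiv_toLp (Fin 2))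
  set ρ := (((MeasurableEquiv.toLp 2 (Fin 2 → ℝ)).symm).trans (MeasurableEquiv.finTwoArrow) :
        E2 ≃ᵐ ℝ × ℝ) with hρ_def
  have hρ_apply : ∀ x : E2, ρ x = (x 0, x 1) := fun x => rfl
  have hpre : ρ ⁻¹' S = tri j₁ 0 := by
    ext x
    simp only [Set.mem_preimage, hρ_apply, hS_def, Set.mem_setOf_eq, tri]
  have htrans := hρ.setLIntegral_comp_preimage_emb ρ.measurableEmbedding F S
  rw [hpre] at htrans
  have hcomp : (fun x : E2 => F (ρ x)) = fun x => ENNReal.ofReal (‖x‖ ^ (2*α)) := by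
    funext x
    rw [hρ_apply, hF_def, hnorm]
  rw [hcomp] at htrans
  rw [htrans]
  -- step 3: Tonelli
  rw [← lintegral_indicator hS, Measure.volume_eq_prod,
    MeasureTheory.lintegral_prod _ ((hFmeas.indicator hS).aemeasurable)]
  have inner_eq : ∀ x : ℝ, ∫⁻ y, S.indicator F (x, y) =
      (Set.Icc (0:ℝ) j₁).indicator (fun x => ∫⁻ y in Set.Icc 0 x, F (x, y)) x := by
    intro x
    by_cases hx : x ∈ Set.Icc (0:ℝ) j₁
    · rw [Set.indicator_of_mem hx, ← lintegral_indicator measurableSet_Icc]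
      congr 1
      funext y
      by_cases hy : y ∈ Set.Icc (0:ℝ) x
      · rw [Set.indicator_of_mem hy, Set.indicator_of_mem]
        exact ⟨hx.1, hx.2, hy.1, hy.2⟩
      · rw [Set.indicator_of_notMem hy, Set.indicator_of_notMem]
        intro hmem
        exact hy ⟨hmem.2.2.1, hmem.2.2.2⟩
    · rw [Set.indicator_of_notMem hx]
      have hz : ∀ y, S.indicator F (x, y) = 0 := by
        intro y
        apply Set.indicator_of_notMem
        intro hmem
        exact hx ⟨hmem.1, hmem.2.1⟩
      simp only [hz, lintegral_zero]
  simp_rw [inner_eq]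
  rw [lintegral_indicator measurableSet_Icc]
  rw [← Measure.restrict_congr_set Ioc_ae_eq_Icc]
  -- step 4: inner integral evaluation
  have inner_val : ∀ x ∈ Set.Ioc (0:ℝ) j₁,
      ∫⁻ y in Set.Icc (0:ℝ) x, F (x, y) = ENNReal.ofReal (x ^ (2*α+1) * C) := by
    intro x hx
    have hx0 : 0 < x := hx.1
    rw [← Measure.restrict_congr_set Ioc_ae_eq_Icc]
    have hcont : Continuous (fun y : ℝ => (x^2+y^2)^α) := by
      apply Continuous.rpow_const (continuous_const.add (continuous_pow 2))
      intro y
      exact Or.inl (by positivity : (0:ℝ) < x^2 + y^2).ne'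
    have hint : IntegrableOn (fun y : ℝ => (x^2+y^2)^α) (Set.Ioc 0 x) := hcont.integrableOn_Ioc
    have hnn : 0 ≤ᵐ[volume.restrict (Set.Ioc (0:ℝ) x)] fun y : ℝ => (x^2+y^2)^α :=
      Eventually.of_forall fun y => Real.rpow_nonneg (by positivity) _
    rw [hF_def]
    simp only
    rw [← MeasureTheory.ofReal_integral_eq_lintegral_ofReal hint hnn]
    congr 1
    rw [← intervalIntegral.integral_of_le hx0.le]
    have hsub := intervalIntegral.integral_comp_mul_left
      (f := fun y : ℝ => (x^2+y^2)^α) (a := 0) (b := 1) (c := x) hx0.ne'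
    rw [mul_zero, mul_one] at hsub
    have hval : ∀ t ∈ Set.uIcc (0:ℝ) 1, (x^2 + (x*t)^2)^α = x^(2*α) * (1+t^2)^α := by
      intro t _
      have h1 : x^2 + (x*t)^2 = x^2 * (1 + t^2) := by ring
      rw [h1, Real.mul_rpow (by positivity) (by positivity)]
      congr 1
      rw [← Real.rpow_natCast x 2, ← Real.rpow_mul hx0.le]
      norm_num
    rw [intervalIntegral.integral_congr hval] at hsub
    rw [intervalIntegral.integral_const_mul, smul_eq_mul] at hsub
    rw [← hC_def] at hsub
    have h3 := congrArg (fun z => x * z) hsub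
    simp only [← mul_assoc, mul_inv_cancel₀ hx0.ne', one_mul] at h3
    rw [← h3]
    congr 1
    rw [Real.rpow_add_one hx0.ne' (2*α)]
    ring
  rw [setLIntegral_congr_fun measurableSet_Ioc inner_val]
  -- step 5: outer integral
  have hintf : IntegrableOn (fun x : ℝ => x^(2*α+1) * C) (Set.Ioc 0 j₁) := by
    have h1 : IntervalIntegrable (fun x : ℝ => x^(2*α+1)) volume 0 j₁ :=
      intervalIntegral.intervalIntegrable_rpow' (by linarith)
    rw [intervalIntegrable_iff_integrableOn_Ioc_of_le hj₁.le] at h1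
    exact h1.mul_const C
  have hnn2 : 0 ≤ᵐ[volume.restrict (Set.Ioc (0:ℝ) j₁)] fun x : ℝ => x^(2*α+1) * C := by
    filter_upwards [ae_restrict_mem measurableSet_Ioc] with x hx
    exact mul_nonneg (Real.rpow_nonneg hx.1.le _) hC0
  rw [← MeasureTheory.ofReal_integral_eq_lintegral_ofReal hintf hnn2]
  have houter : ∫ x in Set.Ioc (0:ℝ) j₁, x^(2*α+1) * C = C * j₁ ^ (2*α+2) / (2*α+2) := by
    rw [← intervalIntegral.integral_of_le hj₁.le]
    rw [intervalIntegral.integral_mul_const]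
    rw [integral_rpow (Or.inl (by linarith : (-1:ℝ) < 2*α+1))]
    rw [Real.zero_rpow (by linarith : (2*α+1+1 : ℝ) ≠ 0)]
    rw [show (2*α+1+1 : ℝ) = 2*α+2 by ring]
    ring
  rw [houter, ENNReal.toReal_ofReal]
  apply div_nonneg (mul_nonneg hC0 (Real.rpow_nonneg hj₁.le _)) (by linarith)

theorem stmt16 (α : ℝ) (hα : α ∈ Set.Ioo (-1 : ℝ) 0) (j₁ : ℝ) (hj₁ : 0 < j₁) :
    (∫ x in tri j₁ 0, ‖x‖ ^ (2 * α)) =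
      (Real.sqrt 2 * j₁ ^ (2 * α + 2)) / (4 * (α + 1)) *
        hyp2F1 (1 / 2) (3 / 2 + α) (3 / 2) (1 / 2) := by
  have key := tri_integral α hα j₁ hj₁
  rw [key]
  have hsub := subs α
  have h1 : ∫ s in (0:ℝ)..1, (Real.sqrt 2)⁻¹ * (1 - s^2/2)^(-(3/2+α))
      = (Real.sqrt 2)⁻¹ * ∑' k : ℕ, bt (3/2+α) (1/2) k / (2*k+1) := by
    rw [intervalIntegral.integral_const_mul]
    congr 1
    rw [intervalIntegral.integral_of_le (by norm_num : (0:ℝ) ≤ 1)]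
    exact intE (3/2+α)
  have h2 : hyp2F1 (1/2) (3/2+α) (3/2) (1/2) = ∑' k : ℕ, bt (3/2+α) (1/2) k / (2*k+1) := by
    rw [hyp2F1]
    apply tsum_congr
    intro k
    have hp13 := P13 k
    have hpos : 0 < P k (1/2) := P_pos (by norm_num) k
    have h2k : (0:ℝ) < 2*(k:ℝ)+1 := by positivity
    change (P k (1/2) * P k (3/2+α) / P k (3/2)) * (1/2)^k / (k.factorial : ℝ)
      = bt (3/2+α) (1/2) k / (2*(k:ℝ)+1)
    rw [bt, hp13]
    have hfk : ((k.factorial : ℝ)) ≠ 0 := Nat.cast_ne_zero.mpr k.factorial_ne_zero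
    field_simp
  rw [h2, ← hsub, h1]
  have hss : Real.sqrt 2 * Real.sqrt 2 = 2 := Real.mul_self_sqrt (by norm_num)
  have hs2 : (0:ℝ) < Real.sqrt 2 := by positivity
  have hα1 : (0:ℝ) < α + 1 := by linarith [hα.1]
  have hinv : (Real.sqrt 2)⁻¹ = Real.sqrt 2 / 2 := by
    rw [eq_div_iff (by norm_num : (2:ℝ) ≠ 0), inv_mul_eq_iff_eq_mul₀ hs2.ne']
    linarith [hss]
  rw [hinv]
  have h2a : (2*α+2 : ℝ) ≠ 0 := by linarith
  field_simp
  ring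

end
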